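/- Let P(q) = ∑_{j=0}^n q^j a_j be a quaternionic polynomial of degree n (so a_n ≠ 0). Then for every I ∈ 𝕊, ∫_0^{2π} |P'(e^{Iθ})|² dθ ≤ n² · ∫_0^{2π} |P(e^{Iθ})|² dθ. -/

import Mathlib

open Quaternion

noncomputable def bw (I : ℍ[ℝ]) (t : ℝ) : ℍ[ℝ] := (Real.cos t : ℍ[ℝ]) + Real.sin t • I

lemma bw_cont (I : ℍ[ℝ]) : Continuous (bw I) := by
  unfold bw
  exact (Quaternion.continuous_coe.comp Real.continuous_cos).add
    (Real.continuous_sin.smul continuous_const)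

lemma bw_zero (I : ℍ[ℝ]) : bw I 0 = 1 := by simp [bw]

lemma bI_re (I : ℍ[ℝ]) (hI : I ^ 2 = -1) : I.re = 0 ∧ Quaternion.normSq I = 1 := by
  have h := hI
  rw [sq] at h
  have hre := congrArg QuaternionAlgebra.re h
  have h1 := congrArg QuaternionAlgebra.imI h
  have h2 := congrArg QuaternionAlgebra.imJ h
  have h3 := congrArg QuaternionAlgebra.imK h
  simp [Quaternion.re_mul, Quaternion.imI_mul, Quaternion.imJ_mul, Quaternion.imK_mul] at hre h1 h2 h3
  constructor
  · nlinarith [sq_nonneg I.re, sq_nonneg I.imI, sq_nonneg I.imJ, sq_nonneg I.imK]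
  · rw [Quaternion.normSq_def']
    nlinarith [sq_nonneg I.re, sq_nonneg I.imI, sq_nonneg I.imJ, sq_nonneg I.imK]

lemma bstar_I (I : ℍ[ℝ]) (hI : I ^ 2 = -1) : star I = -I := by
  have h := (bI_re I hI).1
  ext <;> simp [h]

lemma bw_add (I : ℍ[ℝ]) (hI : I ^ 2 = -1) (s t : ℝ) : bw I s * bw I t = bw I (s + t) := by
  have hII : I * I = -1 := by rw [← sq]; exact hI
  simp only [bw, Real.cos_add, Real.sin_add]
  have hsm : ∀ (r : ℝ) (q : ℍ[ℝ]), r • q = (r : ℍ[ℝ]) * q := fun r q =>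
    (Quaternion.coe_mul_eq_smul r q).symm
  simp only [hsm]
  have hc : ∀ (r : ℝ), I * (r : ℍ[ℝ]) = (r : ℍ[ℝ]) * I := fun r =>
    (Quaternion.coe_commutes r I).symm
  have h1 : (Real.sin s : ℍ[ℝ]) * I * (Real.cos t : ℍ[ℝ]) = ((Real.sin s * Real.cos t : ℝ) : ℍ[ℝ]) * I := by
    rw [mul_assoc, hc, ← mul_assoc, ← Quaternion.coe_mul]
  have h2 : (Real.cos s : ℍ[ℝ]) * ((Real.sin t : ℍ[ℝ]) * I) = ((Real.cos s * Real.sin t : ℝ) : ℍ[ℝ]) * I := by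
    push_cast; rw [mul_assoc]
  have h3 : (Real.sin s : ℍ[ℝ]) * I * ((Real.sin t : ℍ[ℝ]) * I) =
      -(((Real.sin s * Real.sin t : ℝ) : ℍ[ℝ])) := by
    rw [mul_assoc, ← mul_assoc I, hc, mul_assoc, hII, mul_neg_one, mul_neg, ← Quaternion.coe_mul]
  rw [add_mul, mul_add, mul_add, h1, h2, h3]
  rw [show ∀ x y z w : ℍ[ℝ], x + y + (z + -w) = (x - w) + (y + z) from fun _ _ _ _ => by abel]
  rw [← add_mul, ← Quaternion.coe_mul, ← Quaternion.coe_sub, ← Quaternion.coe_add]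
  congr 2 <;> ring

lemma bw_pow (I : ℍ[ℝ]) (hI : I ^ 2 = -1) (t : ℝ) (j : ℕ) :
    (bw I t) ^ j = bw I (j * t) := by
  induction j with
  | zero => simp [bw_zero]
  | succ k ih =>
    rw [pow_succ, ih, bw_add I hI]
    congr 1
    push_cast; ring

lemma bstar_bw (I : ℍ[ℝ]) (hI : I ^ 2 = -1) (t : ℝ) : star (bw I t) = bw I (-t) := by
  simp [bw, Quaternion.star_smul, bstar_I I hI, Real.cos_neg, Real.sin_neg, neg_smul]

lemma bw_mul_re (I : ℍ[ℝ]) (t : ℝ) (c : ℍ[ℝ]) :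
    (bw I t * c).re = Real.cos t * c.re + Real.sin t * (I * c).re := by
  simp [bw, add_mul, smul_mul_assoc]

lemma bint_cos (m : ℝ) (hm : m ≠ 0) (hsin : Real.sin (m * (2 * Real.pi)) = 0) :
    ∫ θ in (0:ℝ)..(2 * Real.pi), Real.cos (m * θ) = 0 := by
  rw [intervalIntegral.integral_comp_mul_left Real.cos hm]
  simp [integral_cos, hsin]

lemma bint_sin (m : ℝ) (hcos : Real.cos (m * (2 * Real.pi)) = 1) :
    ∫ θ in (0:ℝ)..(2 * Real.pi), Real.sin (m * θ) = 0 := by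
  rcases eq_or_ne m 0 with h | h
  · simp [h]
  · rw [intervalIntegral.integral_comp_mul_left Real.sin h]
    simp [integral_sin, hcos]

lemma bre_comm (x y : ℍ[ℝ]) : (x * y).re = (y * x).re := by
  simp only [Quaternion.re_mul]; ring

lemma bterm (I : ℍ[ℝ]) (hI : I ^ 2 = -1) (j k : ℕ) (x y : ℍ[ℝ]) (θ : ℝ) :
    ((bw I θ) ^ j * x * star ((bw I θ) ^ k * y)).re
      = Real.cos (((j : ℝ) - k) * θ) * (x * star y).re
        + Real.sin (((j : ℝ) - k) * θ) * (I * (x * star y)).re := by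
  rw [star_mul, bw_pow I hI θ j, bw_pow I hI θ k, bstar_bw I hI]
  rw [mul_assoc, ← mul_assoc x, ← mul_assoc]
  rw [bre_comm, ← mul_assoc, bw_add I hI]
  rw [show -(↑k * θ) + ↑j * θ = ((j : ℝ) - k) * θ by ring]
  exact bw_mul_re I _ _

lemma bkey (I : ℍ[ℝ]) (hI : I ^ 2 = -1) (m : ℕ) (b : ℕ → ℍ[ℝ]) :
    (∫ θ in (0:ℝ)..(2 * Real.pi), ‖∑ j ∈ Finset.range m, (bw I θ) ^ j * b j‖ ^ 2)
      = 2 * Real.pi * ∑ j ∈ Finset.range m, ‖b j‖ ^ 2 := by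
  have hre : ∀ {ι : Type} (s : Finset ι) (f : ι → ℍ[ℝ]),
      (∑ i ∈ s, f i).re = ∑ i ∈ s, (f i).re := by
    intro ι s f
    exact map_sum (AddMonoidHom.mk' QuaternionAlgebra.re (fun a b => Quaternion.re_add a b)) f s
  have hpt : ∀ θ : ℝ, ‖∑ j ∈ Finset.range m, (bw I θ) ^ j * b j‖ ^ 2
      = ∑ j ∈ Finset.range m, ∑ k ∈ Finset.range m,
          (Real.cos (((j : ℝ) - k) * θ) * ((b j * star (b k)).re)
            + Real.sin (((j : ℝ) - k) * θ) * ((I * (b j * star (b k))).re)) := by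
    intro θ
    have h1 : ‖∑ j ∈ Finset.range m, (bw I θ) ^ j * b j‖ ^ 2
        = ((∑ j ∈ Finset.range m, (bw I θ) ^ j * b j)
            * star (∑ k ∈ Finset.range m, (bw I θ) ^ k * b k)).re := by
      rw [← Quaternion.normSq_def, Quaternion.normSq_eq_norm_mul_self, sq]
    rw [h1, star_sum, Finset.sum_mul_sum, hre]
    refine Finset.sum_congr rfl fun j _ => ?_
    rw [hre]
    exact Finset.sum_congr rfl fun k _ => bterm I hI j k (b j) (b k) θ
  simp only [hpt]
  rw [intervalIntegral.integral_finset_sum (fun j _ => ?_)]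
  swap
  · apply Continuous.intervalIntegrable
    fun_prop
  rw [Finset.mul_sum]
  refine Finset.sum_congr rfl fun j hj => ?_
  rw [intervalIntegral.integral_finset_sum (fun k _ => ?_)]
  swap
  · apply Continuous.intervalIntegrable
    fun_prop
  rw [Finset.sum_eq_single j]
  · have hz : ((j : ℝ) - j) = 0 := sub_self _
    have : (∫ θ in (0:ℝ)..(2 * Real.pi),
        (Real.cos (((j : ℝ) - j) * θ) * ((b j * star (b j)).re)
          + Real.sin (((j : ℝ) - j) * θ) * ((I * (b j * star (b j))).re)))
        = 2 * Real.pi * ((b j * star (b j)).re) := by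
      simp [hz]
      ring
    rw [this]
    congr 1
    rw [← Quaternion.normSq_def, Quaternion.normSq_eq_norm_mul_self, sq]
  · intro k _ hkj
    have hm : ((j : ℝ) - k) ≠ 0 := by
      rw [sub_ne_zero]
      exact_mod_cast fun h => hkj (by exact_mod_cast h.symm)
    have hsin : Real.sin (((j : ℝ) - k) * (2 * Real.pi)) = 0 := by
      rw [show ((j : ℝ) - k) * (2 * Real.pi) = ((2 * ((j : ℤ) - k) : ℤ) : ℝ) * Real.pi by
        push_cast; ring]
      exact Real.sin_int_mul_pi _
    have hcos : Real.cos (((j : ℝ) - k) * (2 * Real.pi)) = 1 := by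
      rw [show ((j : ℝ) - k) * (2 * Real.pi) = (((j : ℤ) - k : ℤ) : ℝ) * (2 * Real.pi) by
        push_cast; ring]
      exact Real.cos_int_mul_two_pi _
    rw [intervalIntegral.integral_add, intervalIntegral.integral_mul_const,
      intervalIntegral.integral_mul_const, bint_cos _ hm hsin, bint_sin _ hcos]
    · ring
    · apply Continuous.intervalIntegrable; fun_prop
    · apply Continuous.intervalIntegrable; fun_prop
  · intro h
    exact absurd hj h

/-- `L²` Bernstein inequality on each slice: for a quaternionic polynomial
`P(q) = ∑_{j=0}^n q^j a_j` of degree `n` and any imaginary unit `I`,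
`∫_0^{2π} ‖P'(e^{Iθ})‖² dθ ≤ n² ∫_0^{2π} ‖P(e^{Iθ})‖² dθ`. -/
theorem bernstein_L2_quaternion (n : ℕ) (a : ℕ → ℍ[ℝ]) (han : a n ≠ 0)
    (I : ℍ[ℝ]) (hI : I ^ 2 = -1) :
    (∫ θ in (0:ℝ)..(2 * Real.pi),
        ‖∑ j ∈ Finset.range (n + 1),
          ((Real.cos θ : ℍ[ℝ]) + Real.sin θ • I) ^ (j - 1) * (j : ℍ[ℝ]) * a j‖ ^ 2) ≤
      (n : ℝ) ^ 2 * ∫ θ in (0:ℝ)..(2 * Real.pi),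
        ‖∑ j ∈ Finset.range (n + 1),
          ((Real.cos θ : ℍ[ℝ]) + Real.sin θ • I) ^ j * a j‖ ^ 2 := by
  have hL : ∀ θ : ℝ, (∑ j ∈ Finset.range (n + 1),
      (bw I θ) ^ (j - 1) * (j : ℍ[ℝ]) * a j)
      = ∑ j ∈ Finset.range n, (bw I θ) ^ j * (((j + 1 : ℕ) : ℍ[ℝ]) * a (j + 1)) := by
    intro θ
    rw [Finset.sum_range_succ']
    simp [mul_assoc]
  show (∫ θ in (0:ℝ)..(2 * Real.pi),
      ‖∑ j ∈ Finset.range (n + 1), (bw I θ) ^ (j - 1) * (j : ℍ[ℝ]) * a j‖ ^ 2) ≤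
    (n : ℝ) ^ 2 * ∫ θ in (0:ℝ)..(2 * Real.pi),
      ‖∑ j ∈ Finset.range (n + 1), (bw I θ) ^ j * a j‖ ^ 2
  simp only [hL]
  rw [bkey I hI, bkey I hI]
  have h2pi : (0:ℝ) ≤ 2 * Real.pi := by positivity
  rw [Finset.sum_range_succ' (fun j => ‖a j‖ ^ 2) n]
  have hterm : ∀ j ∈ Finset.range n,
      ‖((j + 1 : ℕ) : ℍ[ℝ]) * a (j + 1)‖ ^ 2 ≤ (n : ℝ) ^ 2 * ‖a (j + 1)‖ ^ 2 := by
    intro j hj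
    have hj' : (j : ℝ) + 1 ≤ n := by
      exact_mod_cast Nat.succ_le_of_lt (Finset.mem_range.1 hj)
    have hn : ‖((j + 1 : ℕ) : ℍ[ℝ]) * a (j + 1)‖ = ((j : ℝ) + 1) * ‖a (j + 1)‖ := by
      rw [show ((j + 1 : ℕ) : ℍ[ℝ]) = ((((j : ℝ) + 1 : ℝ)) : ℍ[ℝ]) by norm_cast]
      rw [norm_mul, Quaternion.norm_coe, Real.norm_of_nonneg (by positivity)]
    rw [hn, mul_pow]
    exact mul_le_mul_of_nonneg_right (pow_le_pow_left₀ (by positivity) hj' 2) (sq_nonneg _)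
  calc 2 * Real.pi * ∑ j ∈ Finset.range n, ‖((j + 1 : ℕ) : ℍ[ℝ]) * a (j + 1)‖ ^ 2
      ≤ 2 * Real.pi * ∑ j ∈ Finset.range n, (n : ℝ) ^ 2 * ‖a (j + 1)‖ ^ 2 :=
        mul_le_mul_of_nonneg_left (Finset.sum_le_sum hterm) h2pi
    _ = (n : ℝ) ^ 2 * (2 * Real.pi * ∑ j ∈ Finset.range n, ‖a (j + 1)‖ ^ 2) := by
        rw [← Finset.mul_sum]; ring
    _ ≤ (n : ℝ) ^ 2 * (2 * Real.pi * (∑ j ∈ Finset.range n, ‖a (j + 1)‖ ^ 2 + ‖a 0‖ ^ 2)) := by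
        gcongr
        exact le_add_of_nonneg_right (sq_nonneg _)
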